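/- The Study determinant is multiplicative: for all quaternionic n×n matrices M and N, Sdet(MN) = Sdet(M)·Sdet(N). -/
import Mathlib


open scoped Quaternion

/-- The simplex part of a quaternion `x = a + j·b`: the complex number `a = x₀ + x₁·i`. -/
noncomputable def qSimplex (x : ℍ[ℝ]) : ℂ := ⟨x.re, x.imI⟩

/-- The perplex part of a quaternion `x = a + j·b`: the complex number `b = x₂ − x₃·i`. -/
noncomputable def qPerplex (x : ℍ[ℝ]) : ℂ := ⟨x.imJ, -x.imK⟩

/-- The simplex part of a quaternionic matrix. -/
noncomputable def matSimplex {α β : Type*} (M : Matrix α β ℍ[ℝ]) : Matrix α β ℂ :=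
  Matrix.of fun r s => qSimplex (M r s)

/-- The perplex part of a quaternionic matrix. -/
noncomputable def matPerplex {α β : Type*} (M : Matrix α β ℍ[ℝ]) : Matrix α β ℂ :=
  Matrix.of fun r s => qPerplex (M r s)

/-- The complex-block representation `ψ(M) = [[Mˢ, −conj(Mᵖ)], [Mᵖ, conj(Mˢ)]]`
of a quaternionic matrix `M = Mˢ + j·Mᵖ`. -/
noncomputable def psi {α β : Type*} (M : Matrix α β ℍ[ℝ]) : Matrix (α ⊕ α) (β ⊕ β) ℂ :=
  Matrix.fromBlocks (matSimplex M) (-(matPerplex M).map (starRingEnd ℂ))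
    (matPerplex M) ((matSimplex M).map (starRingEnd ℂ))

/-- The Study determinant of a square quaternionic matrix: `Sdet(M) = det(ψ(M))`. -/
noncomputable def Sdet {α : Type*} [Fintype α] [DecidableEq α] (M : Matrix α α ℍ[ℝ]) : ℂ :=
  (psi M).det


noncomputable def qSimplexHom : ℍ[ℝ] →+ ℂ where
  toFun := qSimplex
  map_zero' := by simp [qSimplex, Complex.ext_iff]
  map_add' x y := by simp [qSimplex, Complex.ext_iff]

noncomputable def qPerplexHom : ℍ[ℝ] →+ ℂ where
  toFun := qPerplex
  map_zero' := by simp [qPerplex, Complex.ext_iff]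
  map_add' x y := by simp [qPerplex, Complex.ext_iff]; ring

lemma qSimplex_sum {n : ℕ} (x : Fin n → ℍ[ℝ]) :
    qSimplex (∑ j, x j) = ∑ j, qSimplex (x j) := map_sum qSimplexHom x Finset.univ

lemma qPerplex_sum {n : ℕ} (x : Fin n → ℍ[ℝ]) :
    qPerplex (∑ j, x j) = ∑ j, qPerplex (x j) := map_sum qPerplexHom x Finset.univ

lemma qSimplex_mul (x y : ℍ[ℝ]) :
    qSimplex (x * y) = qSimplex x * qSimplex y - (starRingEnd ℂ) (qPerplex x) * qPerplex y := by
  simp only [qSimplex, qPerplex, Complex.ext_iff, Quaternion.re_mul, Quaternion.imI_mul,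
    Complex.sub_re, Complex.sub_im, Complex.mul_re, Complex.mul_im, Complex.conj_re,
    Complex.conj_im]
  constructor <;> ring

lemma qPerplex_mul (x y : ℍ[ℝ]) :
    qPerplex (x * y) = (starRingEnd ℂ) (qSimplex x) * qPerplex y + qPerplex x * qSimplex y := by
  simp only [qSimplex, qPerplex, Complex.ext_iff, Quaternion.imJ_mul, Quaternion.imK_mul,
    Complex.add_re, Complex.add_im, Complex.mul_re, Complex.mul_im, Complex.conj_re,
    Complex.conj_im]
  constructor <;> ring

lemma psi_mul {n : ℕ} (M N : Matrix (Fin n) (Fin n) ℍ[ℝ]) :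
    psi (M * N) = psi M * psi N := by
  ext i k
  rcases i with i | i <;> rcases k with k | k <;>
  · simp only [psi, Matrix.fromBlocks_apply₁₁, Matrix.fromBlocks_apply₁₂,
      Matrix.fromBlocks_apply₂₁, Matrix.fromBlocks_apply₂₂, Matrix.mul_apply,
      Fintype.sum_sum_type, matSimplex, matPerplex, Matrix.of_apply, Matrix.neg_apply,
      Matrix.map_apply, Matrix.mul_apply, qSimplex_sum, qPerplex_sum, map_sum,
      qSimplex_mul, qPerplex_mul, ← Finset.sum_neg_distrib, ← Finset.sum_add_distrib,
      ← Finset.sum_sub_distrib]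
    refine Finset.sum_congr rfl fun j _ => ?_
    try simp only [map_sub, map_add, map_mul, map_neg, Complex.conj_conj]
    ring

theorem sdet_mul {n : ℕ} (M N : Matrix (Fin n) (Fin n) ℍ[ℝ]) :
    Sdet (M * N) = Sdet M * Sdet N := by
  rw [Sdet, Sdet, Sdet, psi_mul, Matrix.det_mul]
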